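/- Let q ≥ 2 be an integer, n ≥ 1, and φ, β ∈ ℝ. For t ∈ ℝ define A_t(0) = 1 and A_t(m) = t·(t+m)^{{m}−1} for m ≥ 1 (a natural number power, since {m} ≥ 1 for m ≥ 1). Then (φ+β)·(φ+β+n)^{{n}−1} = Σ_{m=0}^n C_q(n,m)·A_φ(m)·A_β(n−m). -/

import Mathlib

open Finset Polynomial

variable {ι : Type*} [DecidableEq ι]

lemma natDegree_sub_comp_le (p : ℝ[X]) (a : ℝ) (d : ℕ) (hp : p.natDegree ≤ d) :
    (p - p.comp (X + C a)).natDegree ≤ d - 1 := by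
  by_cases h0 : p.natDegree = 0
  · obtain ⟨c, rfl⟩ := Polynomial.natDegree_eq_zero.mp h0
    simp
  · have hp0 : p ≠ 0 := fun h => h0 (by simp [h])
    have hdegc : (p.comp (X + C a)).natDegree = p.natDegree := by
      rw [Polynomial.natDegree_comp, Polynomial.natDegree_X_add_C, mul_one]
    have hlc : (p.comp (X + C a)).leadingCoeff = p.leadingCoeff := by
      rw [Polynomial.leadingCoeff_comp (by simp), Polynomial.leadingCoeff_X_add_C, one_pow,
        mul_one]
    have hc0 : p.comp (X + C a) ≠ 0 := by
      intro h
      rw [h, Polynomial.natDegree_zero] at hdegc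
      exact h0 hdegc.symm
    have hdlt : ((p.comp (X + C a)) - p).degree < (p.comp (X + C a)).degree := by
      apply Polynomial.degree_sub_lt _ hc0 hlc
      rw [Polynomial.degree_eq_natDegree hc0, Polynomial.degree_eq_natDegree hp0, hdegc]
    by_cases hd : p - p.comp (X + C a) = 0
    · simp [hd]
    · have : (p - p.comp (X + C a)).natDegree < (p.comp (X + C a)).natDegree := by
        apply Polynomial.natDegree_lt_natDegree hd
        rw [show p - p.comp (X + C a) = -((p.comp (X+C a)) - p) by ring]
        rwa [Polynomial.degree_neg]
      omega

noncomputable def Ep (w : ι → ℝ) (j k : ℕ) (s : Finset ι) : ℝ[X] :=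
  ∑ T ∈ s.powerset, ((-1:ℝ)^T.card * ((s.card - T.card).choose j : ℝ)) •
    (X + C (∑ i ∈ T, w i))^k

lemma Ep_comp (w : ι → ℝ) (j k : ℕ) (s : Finset ι) (a : ℝ) :
    (Ep w j k s).comp (X + C a) =
      ∑ T ∈ s.powerset, ((-1:ℝ)^T.card * ((s.card - T.card).choose j : ℝ)) •
        (X + C (a + ∑ i ∈ T, w i))^k := by
  rw [Ep, Polynomial.sum_comp]
  refine Finset.sum_congr rfl fun T _ => ?_
  rw [Polynomial.smul_comp, Polynomial.pow_comp, Polynomial.add_comp, Polynomial.X_comp,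
    Polynomial.C_comp, add_assoc, ← Polynomial.C_add, mul_comm]

lemma Ep_insert (w : ι → ℝ) (j k : ℕ) (s : Finset ι) (a : ι) (ha : a ∉ s) :
    Ep w j k (insert a s) =
      (∑ T ∈ s.powerset, ((-1:ℝ)^T.card * ((s.card + 1 - T.card).choose j : ℝ)) •
        (X + C (∑ i ∈ T, w i))^k) - (Ep w j k s).comp (X + C (w a)) := by
  rw [Ep, Finset.sum_powerset_insert ha, Ep_comp, sub_eq_add_neg, ← Finset.sum_neg_distrib]
  congr 1
  · refine Finset.sum_congr rfl fun T hT => ?_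
    rw [Finset.card_insert_of_notMem ha]
  · refine Finset.sum_congr rfl fun T hT => ?_
    have haT : a ∉ T := fun h => ha (Finset.mem_powerset.mp hT h)
    rw [Finset.card_insert_of_notMem haT, Finset.card_insert_of_notMem ha,
      Finset.sum_insert haT, Nat.succ_sub_succ, pow_succ]
    rw [← neg_smul]
    ring_nf

lemma Ep_natDegree (w : ι → ℝ) (j k : ℕ) (s : Finset ι) :
    (Ep w j k s).natDegree ≤ j + k - s.card := by
  induction s using Finset.induction generalizing j with
  | empty =>
    have hk : (Ep w j k ∅).natDegree ≤ k := by
      rw [Ep]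
      simp only [Finset.powerset_empty, Finset.sum_singleton]
      refine le_trans (Polynomial.natDegree_smul_le _ _) ?_
      refine le_trans (Polynomial.natDegree_pow_le) ?_
      rw [Polynomial.natDegree_X_add_C, mul_one]
    simp only [Finset.card_empty] at *
    omega
  | @insert a s ha ih =>
    match j with
    | 0 =>
      have hrw : Ep w 0 k (insert a s) = Ep w 0 k s - (Ep w 0 k s).comp (X + C (w a)) := by
        rw [Ep_insert w 0 k s a ha, Ep]
        simp [Nat.choose_zero_right]
      rw [hrw, Finset.card_insert_of_notMem ha]
      have := natDegree_sub_comp_le (Ep w 0 k s) (w a) (0 + k - s.card) (ih 0)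
      omega
    | j + 1 =>
      have hrw : Ep w (j+1) k (insert a s) =
          Ep w j k s + (Ep w (j+1) k s - (Ep w (j+1) k s).comp (X + C (w a))) := by
        rw [Ep_insert w (j+1) k s a ha]
        have : (∑ T ∈ s.powerset, ((-1:ℝ)^T.card * ((s.card + 1 - T.card).choose (j+1) : ℝ)) •
            (X + C (∑ i ∈ T, w i))^k) = Ep w j k s + Ep w (j+1) k s := by
          rw [Ep, Ep, ← Finset.sum_add_distrib]
          refine Finset.sum_congr rfl fun T hT => ?_
          have hTs : T.card ≤ s.card := Finset.card_le_card (Finset.mem_powerset.mp hT)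
          rw [show s.card + 1 - T.card = (s.card - T.card) + 1 by omega, Nat.choose_succ_succ]
          push_cast
          rw [mul_add, add_smul]
        rw [this]
        ring
      rw [hrw, Finset.card_insert_of_notMem ha]
      refine le_trans (Polynomial.natDegree_add_le _ _) ?_
      have h1 := ih j
      have h2 := natDegree_sub_comp_le (Ep w (j+1) k s) (w a) ((j+1) + k - s.card) (ih (j+1))
      omega

lemma Ereal_eval (w : ι → ℝ) (j k : ℕ) (s : Finset ι) (x : ℝ) :
    Polynomial.eval x (Ep w j k s) =
      ∑ T ∈ s.powerset, (-1:ℝ)^T.card * ((s.card - T.card).choose j : ℝ) *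
        (x + ∑ i ∈ T, w i)^k := by
  rw [Ep, Polynomial.eval_finset_sum]
  refine Finset.sum_congr rfl fun T _ => ?_
  simp [mul_assoc]
  left
  simp [Polynomial.eval_finset_sum]

lemma Ereal_const (w : ι → ℝ) (j k : ℕ) (s : Finset ι) (h : j + k ≤ s.card) (x x' : ℝ) :
    ∑ T ∈ s.powerset, (-1:ℝ)^T.card * ((s.card - T.card).choose j : ℝ) *
        (x + ∑ i ∈ T, w i)^k =
    ∑ T ∈ s.powerset, (-1:ℝ)^T.card * ((s.card - T.card).choose j : ℝ) *
        (x' + ∑ i ∈ T, w i)^k := by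
  rw [← Ereal_eval, ← Ereal_eval]
  have h0 : (Ep w j k s).natDegree = 0 :=
    Nat.le_zero.mp (le_trans (Ep_natDegree w j k s) (by omega))
  obtain ⟨c, hc⟩ := Polynomial.natDegree_eq_zero.mp h0
  rw [← hc]
  simp

/-- `P(x,y,s) = Σ_{T⊆s} (x+σT)^{|T|} (y+σ(s\T))^{|s\T|}`. -/
noncomputable def Pfun (w : ι → ℝ) (x y : ℝ) (s : Finset ι) : ℝ :=
  ∑ T ∈ s.powerset, (x + ∑ i ∈ T, w i)^T.card * (y + ∑ i ∈ s \ T, w i)^((s \ T).card)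

lemma Pfun_expand (w : ι → ℝ) (x y : ℝ) (s : Finset ι) :
    Pfun w x y s = ∑ i ∈ Finset.range (s.card + 1), (x + y + ∑ i ∈ s, w i)^i *
      ((-1:ℝ)^(s.card - i) *
        ∑ T ∈ s.powerset, (-1:ℝ)^T.card * ((s.card - T.card).choose i : ℝ) *
          (x + ∑ i ∈ T, w i)^(s.card - i)) := by
  rw [Pfun]
  have step1 : ∀ T ∈ s.powerset,
      (x + ∑ i ∈ T, w i)^T.card * (y + ∑ i ∈ s \ T, w i)^((s \ T).card) =
      ∑ i ∈ Finset.range (s.card + 1),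
        (x + y + ∑ i ∈ s, w i)^i * ((-1:ℝ)^(s.card - i) *
          ((-1:ℝ)^T.card * (((s \ T).card).choose i : ℝ) *
            (x + ∑ i ∈ T, w i)^(s.card - i))) := by
    intro T hT
    have hTs : T ⊆ s := Finset.mem_powerset.mp hT
    have hcard : (s \ T).card = s.card - T.card := Finset.card_sdiff_of_subset hTs
    have hle : T.card ≤ s.card := Finset.card_le_card hTs
    have hsplit : y + ∑ i ∈ s \ T, w i =
        (x + y + ∑ i ∈ s, w i) + (-(x + ∑ i ∈ T, w i)) := by
      rw [← Finset.sum_sdiff hTs]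
      ring
    have hpow : ((x + y + ∑ i ∈ s, w i) + (-(x + ∑ i ∈ T, w i)))^((s \ T).card) =
        ∑ i ∈ Finset.range (s.card + 1), (x + y + ∑ i ∈ s, w i)^i *
          (-(x + ∑ i ∈ T, w i))^((s \ T).card - i) * (((s \ T).card).choose i : ℝ) := by
      rw [add_pow]
      apply Finset.sum_subset (Finset.range_subset_range.mpr (by omega))
      intro i _ hi
      have : (s \ T).card < i := by
        simp only [Finset.mem_range, not_lt] at *
        omega
      simp [Nat.choose_eq_zero_of_lt this]
    rw [hsplit, hpow, Finset.mul_sum]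
    refine Finset.sum_congr rfl fun i _ => ?_
    rcases le_or_gt i ((s \ T).card) with hic | hic
    · rw [neg_pow]
      have e1 : (x + ∑ i ∈ T, w i)^T.card * (x + ∑ i ∈ T, w i)^((s \ T).card - i) =
          (x + ∑ i ∈ T, w i)^(s.card - i) := by
        rw [← pow_add]
        congr 1
        omega
      have e2 : (-1:ℝ)^(s.card - i) * (-1:ℝ)^T.card = (-1:ℝ)^((s \ T).card - i) := by
        rw [← pow_add, show s.card - i + T.card = ((s \ T).card - i) + 2 * T.card by omega,
          pow_add, pow_mul]
        norm_num
      rw [← e2, ← e1]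
      ring
    · rw [Nat.choose_eq_zero_of_lt hic]
      push_cast
      ring
  rw [Finset.sum_congr rfl step1, Finset.sum_comm]
  refine Finset.sum_congr rfl fun i _ => ?_
  rw [Finset.mul_sum, Finset.mul_sum]
  refine Finset.sum_congr rfl fun T hT => ?_
  have hcard : (s \ T).card = s.card - T.card :=
    Finset.card_sdiff_of_subset (Finset.mem_powerset.mp hT)
  rw [hcard]

lemma Pinv (w : ι → ℝ) (s : Finset ι) (x y x' y' : ℝ) (h : x + y = x' + y') :
    Pfun w x y s = Pfun w x' y' s := by
  rw [Pfun_expand, Pfun_expand, h]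
  refine Finset.sum_congr rfl fun i hi => ?_
  have hik : i + (s.card - i) ≤ s.card := by
    simp only [Finset.mem_range] at hi; omega
  rw [Ereal_const w i (s.card - i) s hik x x']

noncomputable def Aset (w : ι → ℝ) (x : ℝ) (T : Finset ι) : ℝ :=
  if T = ∅ then 1 else x * (x + ∑ i ∈ T, w i)^(T.card - 1)

lemma Aset_mul (w : ι → ℝ) (x : ℝ) (T : Finset ι) :
    Aset w x T * (x + ∑ i ∈ T, w i) = x * (x + ∑ i ∈ T, w i)^T.card := by
  rw [Aset]
  by_cases h : T = ∅
  · simp [h]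
  · rw [if_neg h]
    have hc : 1 ≤ T.card := Finset.card_pos.mpr (Finset.nonempty_of_ne_empty h)
    rw [mul_assoc, ← pow_succ]
    congr 2
    omega

noncomputable def Ffun (w : ι → ℝ) (x y : ℝ) (s : Finset ι) : ℝ :=
  ∑ T ∈ s.powerset, Aset w x T * (y + ∑ i ∈ s \ T, w i)^((s \ T).card)

lemma insert_sdiff_aux {a : ι} {s T : Finset ι} (ha : a ∉ s) (hT : T ⊆ s) :
    insert a s \ T = insert a (s \ T) := by
  ext x
  simp only [Finset.mem_sdiff, Finset.mem_insert]
  constructor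
  · rintro ⟨h1 | h1, h2⟩
    · exact Or.inl h1
    · exact Or.inr ⟨h1, h2⟩
  · rintro (rfl | ⟨h1, h2⟩)
    · exact ⟨Or.inl rfl, fun h => ha (hT h)⟩
    · exact ⟨Or.inr h1, h2⟩

lemma insert_sdiff_insert_aux {a : ι} {s T : Finset ι} (ha : a ∉ s) :
    insert a s \ insert a T = s \ T := by
  ext x
  simp only [Finset.mem_sdiff, Finset.mem_insert, not_or]
  constructor
  · rintro ⟨h1 | h1, h2, h3⟩
    · exact absurd h1 h2
    · exact ⟨h1, h3⟩
  · rintro ⟨h1, h2⟩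
    exact ⟨Or.inr h1, fun hx => ha (hx ▸ h1), h2⟩

lemma Ffun_eq (w : ι → ℝ) (x y : ℝ) (s : Finset ι) :
    Ffun w x y s = (x + y + ∑ i ∈ s, w i)^s.card := by
  induction s using Finset.induction generalizing y with
  | empty => simp [Ffun, Aset]
  | @insert a s ha ih =>
    rw [Ffun, Finset.sum_powerset_insert ha]
    have hterm1 : ∀ T ∈ s.powerset,
        Aset w x T * (y + ∑ i ∈ insert a s \ T, w i)^((insert a s \ T).card) =
        (x + (y + w a) + ∑ i ∈ s, w i) *
          (Aset w x T * ((y + w a) + ∑ i ∈ s \ T, w i)^((s \ T).card))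
        - (x + ∑ i ∈ T, w i) * Aset w x T * ((y + w a) + ∑ i ∈ s \ T, w i)^((s \ T).card) := by
      intro T hT
      have hTs : T ⊆ s := Finset.mem_powerset.mp hT
      have h1 : insert a s \ T = insert a (s \ T) := insert_sdiff_aux ha hTs
      have h2 : a ∉ s \ T := fun h => ha (Finset.mem_sdiff.mp h).1
      rw [h1, Finset.card_insert_of_notMem h2, Finset.sum_insert h2]
      have h3 : y + (w a + ∑ i ∈ s \ T, w i) = (y + w a) + ∑ i ∈ s \ T, w i := by ring
      rw [h3, pow_succ]
      have h4 : y + w a + ∑ i ∈ s \ T, w i =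
          (x + (y + w a) + ∑ i ∈ s, w i) - (x + ∑ i ∈ T, w i) := by
        rw [← Finset.sum_sdiff hTs]
        ring
      nth_rewrite 2 [h4]
      ring
    rw [Finset.sum_congr rfl hterm1, Finset.sum_sub_distrib, ← Finset.mul_sum]
    have hF : ∑ T ∈ s.powerset,
        Aset w x T * ((y + w a) + ∑ i ∈ s \ T, w i)^((s \ T).card) = Ffun w x (y + w a) s :=
      rfl
    have hP1 : ∑ T ∈ s.powerset,
        (x + ∑ i ∈ T, w i) * Aset w x T * ((y + w a) + ∑ i ∈ s \ T, w i)^((s \ T).card) =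
        x * Pfun w x (y + w a) s := by
      rw [Pfun, Finset.mul_sum]
      refine Finset.sum_congr rfl fun T hT => ?_
      rw [mul_comm (x + ∑ i ∈ T, w i) (Aset w x T), Aset_mul]
      ring
    have hterm2 : ∀ T ∈ s.powerset,
        Aset w x (insert a T) * (y + ∑ i ∈ insert a s \ insert a T, w i) ^
          ((insert a s \ insert a T).card) =
        x * ((x + w a + ∑ i ∈ T, w i)^T.card * (y + ∑ i ∈ s \ T, w i)^((s \ T).card)) := by
      intro T hT
      have hTs : T ⊆ s := Finset.mem_powerset.mp hT
      have haT : a ∉ T := fun h => ha (hTs h)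
      rw [insert_sdiff_insert_aux ha]
      rw [Aset, if_neg (Finset.insert_ne_empty a T), Finset.card_insert_of_notMem haT,
        Finset.sum_insert haT, Nat.add_sub_cancel]
      have : x + (w a + ∑ i ∈ T, w i) = x + w a + ∑ i ∈ T, w i := by ring
      rw [this]
      ring
    rw [Finset.sum_congr rfl hterm2, ← Finset.mul_sum]
    have hP2 : ∑ T ∈ s.powerset,
        (x + w a + ∑ i ∈ T, w i)^T.card * (y + ∑ i ∈ s \ T, w i)^((s \ T).card) =
        Pfun w (x + w a) y s := rfl
    rw [hF, hP1, hP2, ih (y + w a)]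
    rw [Pinv w s (x + w a) y x (y + w a) (by ring)]
    rw [Finset.card_insert_of_notMem ha, Finset.sum_insert ha]
    ring

lemma Gfun_eq (w : ι → ℝ) (x y : ℝ) (s : Finset ι) (hs : s.Nonempty) :
    ∑ T ∈ s.powerset, Aset w x T * Aset w y (s \ T) =
      (x + y) * (x + y + ∑ i ∈ s, w i)^(s.card - 1) := by
  obtain ⟨a, ha⟩ := hs
  obtain ⟨s', ha', rfl⟩ : ∃ s', a ∉ s' ∧ insert a s' = s :=
    ⟨s.erase a, Finset.notMem_erase a s, Finset.insert_erase ha⟩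
  rw [Finset.sum_powerset_insert ha']
  have hterm1 : ∀ T ∈ s'.powerset,
      Aset w x T * Aset w y (insert a s' \ T) =
      y * (Aset w x T * ((y + w a) + ∑ i ∈ s' \ T, w i)^((s' \ T).card)) := by
    intro T hT
    have hTs : T ⊆ s' := Finset.mem_powerset.mp hT
    have h2 : a ∉ s' \ T := fun h => ha' (Finset.mem_sdiff.mp h).1
    have hA : Aset w y (insert a (s' \ T)) =
        y * ((y + w a) + ∑ i ∈ s' \ T, w i)^((s' \ T).card) := by
      rw [Aset, if_neg (Finset.insert_ne_empty _ _), Finset.card_insert_of_notMem h2,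
        Finset.sum_insert h2, Nat.add_sub_cancel]
      have : y + (w a + ∑ i ∈ s' \ T, w i) = (y + w a) + ∑ i ∈ s' \ T, w i := by ring
      rw [this]
    rw [insert_sdiff_aux ha' hTs, hA]
    ring
  have hterm2 : ∀ T ∈ s'.powerset,
      Aset w x (insert a T) * Aset w y (insert a s' \ insert a T) =
      x * (Aset w y (s' \ T) * ((x + w a) + ∑ i ∈ T, w i)^(T.card)) := by
    intro T hT
    have hTs : T ⊆ s' := Finset.mem_powerset.mp hT
    have haT : a ∉ T := fun h => ha' (hTs h)
    have hA : Aset w x (insert a T) = x * ((x + w a) + ∑ i ∈ T, w i)^(T.card) := by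
      rw [Aset, if_neg (Finset.insert_ne_empty _ _), Finset.card_insert_of_notMem haT,
        Finset.sum_insert haT, Nat.add_sub_cancel]
      have : x + (w a + ∑ i ∈ T, w i) = (x + w a) + ∑ i ∈ T, w i := by ring
      rw [this]
    rw [insert_sdiff_insert_aux ha', hA]
    ring
  rw [Finset.sum_congr rfl hterm1, Finset.sum_congr rfl hterm2, ← Finset.mul_sum,
    ← Finset.mul_sum]
  have h1 : ∑ T ∈ s'.powerset,
      Aset w x T * ((y + w a) + ∑ i ∈ s' \ T, w i)^((s' \ T).card) =
      Ffun w x (y + w a) s' := rfl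
  have h2 : ∑ T ∈ s'.powerset,
      Aset w y (s' \ T) * ((x + w a) + ∑ i ∈ T, w i)^(T.card) =
      Ffun w y (x + w a) s' := by
    rw [Ffun]
    refine Finset.sum_nbij' (fun T => s' \ T) (fun T => s' \ T) ?_ ?_ ?_ ?_ ?_
    · intro T hT
      exact Finset.mem_powerset.mpr (Finset.sdiff_subset)
    · intro T hT
      exact Finset.mem_powerset.mpr (Finset.sdiff_subset)
    · intro T hT
      exact Finset.sdiff_sdiff_eq_self (Finset.mem_powerset.mp hT)
    · intro T hT
      exact Finset.sdiff_sdiff_eq_self (Finset.mem_powerset.mp hT)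
    · intro T hT
      rw [Finset.sdiff_sdiff_eq_self (Finset.mem_powerset.mp hT)]
  rw [h1, h2, Ffun_eq, Ffun_eq]
  rw [Finset.card_insert_of_notMem ha', Finset.sum_insert ha', Nat.add_sub_cancel]
  ring

section PartB

variable {q : ℕ}

lemma digit_expansion (hq : 2 ≤ q) (n : ℕ) : ∀ K, ∑ t ∈ Finset.range K, (n / q^t % q) * q^t = n % q^K := by
  intro K
  induction K with
  | zero => simp [Nat.mod_one]
  | succ K ih =>
    rw [Finset.sum_range_succ, ih, Nat.mod_pow_succ]
    ring

lemma val_lt (hq : 2 ≤ q) : ∀ (K : ℕ) (k : ℕ → ℕ), (∀ t, t < K → k t < q) →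
    ∑ t ∈ Finset.range K, k t * q^t < q^K := by
  intro K
  induction K with
  | zero => simp
  | succ K ih =>
    intro k hk
    rw [Finset.sum_range_succ']
    have hsum : ∑ t ∈ Finset.range K, k (t+1) * q^(t+1) =
        q * ∑ t ∈ Finset.range K, k (t+1) * q^t := by
      rw [Finset.mul_sum]
      refine Finset.sum_congr rfl fun t _ => ?_
      ring
    rw [hsum]
    have h1 : ∑ t ∈ Finset.range K, k (t+1) * q^t < q^K :=
      ih (fun t => k (t+1)) (fun t ht => hk (t+1) (by omega))
    have h2 : k 0 < q := hk 0 (by omega)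
    have h3 : q * ((∑ t ∈ Finset.range K, k (t+1) * q^t) + 1) ≤ q * q^K :=
      Nat.mul_le_mul_left q h1
    have h4 : q * ((∑ t ∈ Finset.range K, k (t+1) * q^t) + 1) =
        q * (∑ t ∈ Finset.range K, k (t+1) * q^t) + q := by ring
    have h5 : q^(K+1) = q * q^K := by rw [pow_succ]; ring
    simp only [pow_zero, mul_one]
    omega

lemma val_digit (hq : 2 ≤ q) : ∀ (r K : ℕ) (k : ℕ → ℕ), (∀ t, t < K → k t < q) →
    (∑ t ∈ Finset.range K, k t * q^t) / q^r % q = if r < K then k r else 0 := by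
  have hq0 : 0 < q := by omega
  intro r
  induction r with
  | zero =>
    intro K k hk
    match K with
    | 0 => simp
    | K + 1 =>
      rw [if_pos (by omega), Finset.sum_range_succ']
      simp only [pow_zero, Nat.div_one, mul_one]
      have hsum : ∑ t ∈ Finset.range K, k (t+1) * q^(t+1) =
          (∑ t ∈ Finset.range K, k (t+1) * q^t) * q := by
        rw [Finset.sum_mul]
        refine Finset.sum_congr rfl fun t _ => ?_
        ring
      rw [hsum, Nat.mul_add_mod']
      exact Nat.mod_eq_of_lt (hk 0 (by omega))
  | succ r ih =>
    intro K k hk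
    match K with
    | 0 => simp
    | K + 1 =>
      rw [Finset.sum_range_succ']
      have hsum : ∑ t ∈ Finset.range K, k (t+1) * q^(t+1) + k 0 * q^0 =
          q * (∑ t ∈ Finset.range K, k (t+1) * q^t) + k 0 := by
        rw [Finset.mul_sum]
        simp only [pow_zero, mul_one]
        congr 1
        refine Finset.sum_congr rfl fun t _ => ?_
        ring
      rw [hsum]
      have hdiv : (q * (∑ t ∈ Finset.range K, k (t+1) * q^t) + k 0) / q^(r+1) =
          (∑ t ∈ Finset.range K, k (t+1) * q^t) / q^r := by
        have e1 : q^(r+1) = q * q^r := by rw [pow_succ]; ring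
        rw [e1, ← Nat.div_div_eq_div_mul, Nat.mul_add_div hq0,
          Nat.div_eq_of_lt (hk 0 (by omega)), Nat.add_zero]
      rw [hdiv, ih K (fun t => k (t+1)) (fun t ht => hk (t+1) (by omega))]
      by_cases h : r < K
      · rw [if_pos h, if_pos (by omega)]
      · rw [if_neg h, if_neg (by omega)]

lemma shift_digit (hq : 2 ≤ q) {m j K : ℕ} (hm : m < q^K) (t : ℕ) (ht : t ≤ K) :
    (m + q^K * j) / q^t % q = if t < K then m / q^t % q else j % q := by
  have hq0 : 0 < q := by omega
  have hqt : 0 < q^t := pow_pos hq0 t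
  have hKt : q^K = q^t * q^(K - t) := by
    rw [← pow_add]
    congr 1
    omega
  have hdiv : (m + q^K * j) / q^t = m / q^t + q^(K-t) * j := by
    rw [hKt, mul_assoc, Nat.add_mul_div_left _ _ hqt]
  rw [hdiv]
  by_cases h : t < K
  · rw [if_pos h]
    have : q^(K-t) * j = q * (q^(K-t-1) * j) := by
      rw [← mul_assoc, ← pow_succ']
      congr 2
      omega
    rw [this, Nat.add_mul_mod_self_left]
  · rw [if_neg h]
    have htK : t = K := by omega
    subst htK
    rw [Nat.div_eq_of_lt hm, Nat.sub_self, pow_zero, one_mul, Nat.zero_add]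

lemma sum_powerset_union {α : Type*} [DecidableEq α] {A B : Finset α} (hAB : Disjoint A B)
    (f : Finset α → ℝ) :
    ∑ T ∈ (A ∪ B).powerset, f T =
      ∑ U ∈ A.powerset, ∑ V ∈ B.powerset, f (U ∪ V) := by
  induction B using Finset.induction generalizing f with
  | empty => simp
  | @insert b B hb ih =>
    have hAB' : Disjoint A B := by
      apply Finset.disjoint_of_subset_right _ hAB
      exact Finset.subset_insert b B
    have hbA : b ∉ A ∪ B := by
      intro h
      rcases Finset.mem_union.mp h with h | h
      · exact (Finset.disjoint_right.mp hAB (Finset.mem_insert_self b B)) h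
      · exact hb h
    rw [Finset.union_insert, Finset.sum_powerset_insert hbA f, ih hAB' f,
      ih hAB' (fun T => f (insert b T)), ← Finset.sum_add_distrib]
    refine Finset.sum_congr rfl fun U hU => ?_
    rw [Finset.sum_powerset_insert hb (fun V => f (U ∪ V))]
    congr 1
    refine Finset.sum_congr rfl fun V hV => ?_
    rw [Finset.union_insert]

lemma sum_powerset_card {α : Type*} [DecidableEq α] (s : Finset α) (h : ℕ → ℝ) :
    ∑ T ∈ s.powerset, h T.card =
      ∑ j ∈ Finset.range (s.card + 1), (s.card.choose j : ℝ) * h j := by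
  rw [Finset.sum_powerset]
  refine Finset.sum_congr rfl fun j hj => ?_
  have : ∀ T ∈ Finset.powersetCard j s, h T.card = h j := by
    intro T hT
    rw [(Finset.mem_powersetCard.mp hT).2]
  rw [Finset.sum_congr rfl this, Finset.sum_const, Finset.card_powersetCard,
    nsmul_eq_mul]

/-- The finset of base-`q` digit "units" of `n`, positions `t < K`. -/
def sig (q n K : ℕ) : Finset (ℕ × ℕ) :=
  (Finset.range K).biUnion (fun t => {t} ×ˢ Finset.range (n / q^t % q))

lemma mem_sig {n K : ℕ} {p : ℕ × ℕ} :
    p ∈ sig q n K ↔ p.1 < K ∧ p.2 < n / q^p.1 % q := by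
  rcases p with ⟨t, j⟩
  simp only [sig, Finset.mem_biUnion, Finset.mem_range, Finset.mem_product,
    Finset.mem_singleton]
  constructor
  · rintro ⟨a, ha, rfl, h2⟩
    exact ⟨ha, h2⟩
  · rintro ⟨h1, h2⟩
    exact ⟨t, h1, rfl, h2⟩

lemma sum_range_mul' (a b : ℕ) (f : ℕ → ℝ) :
    ∑ i ∈ Finset.range (a * b), f i =
      ∑ j ∈ Finset.range b, ∑ r ∈ Finset.range a, f (r + a * j) := by
  induction b with
  | zero => simp
  | succ b ih =>
    have : a * (b + 1) = a * b + a := by ring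
    rw [this, Finset.sum_range_add, ih, Finset.sum_range_succ]
    congr 1
    refine Finset.sum_congr rfl fun r _ => ?_
    rw [Nat.add_comm (a * b) r]

lemma sig_succ (q n K : ℕ) :
    sig q n (K+1) = ({K} ×ˢ Finset.range (n / q^K % q)) ∪ sig q n K := by
  rw [sig, Finset.range_add_one, Finset.biUnion_insert]
  rfl

lemma sig_col_disjoint (q n K : ℕ) :
    Disjoint ({K} ×ˢ Finset.range (n / q^K % q)) (sig q n K) := by
  rw [Finset.disjoint_left]
  intro p hp hps
  have h1 : p.1 = K := by
    rcases Finset.mem_product.mp hp with ⟨h, _⟩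
    exact Finset.mem_singleton.mp h
  have h2 : p.1 < K := (mem_sig.mp hps).1
  omega

lemma counting (hq : 2 ≤ q) (n : ℕ) : ∀ (K : ℕ) (g : ℕ → ℕ → ℝ),
    ∑ T ∈ (sig q n K).powerset, g (∑ p ∈ T, q^p.1) T.card =
    ∑ m ∈ Finset.range (q^K),
      ((∏ t ∈ Finset.range K, (n / q^t % q).choose (m / q^t % q) : ℕ) : ℝ) *
        g m (∑ t ∈ Finset.range K, m / q^t % q) := by
  have hq0 : 0 < q := by omega
  intro K
  induction K with
  | zero =>
    intro g
    simp [sig]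
  | succ K ih =>
    intro g
    set d := fun t => n / q^t % q with hd
    have hdq : d K < q := Nat.mod_lt _ hq0
    rw [sig_succ, sum_powerset_union (sig_col_disjoint q n K)]
    have hcol_card : ({K} ×ˢ Finset.range (d K)).card = d K := by
      rw [Finset.card_product, Finset.card_singleton, Finset.card_range, one_mul]
    -- evaluate inner sums
    have hstep : ∀ V ∈ ({K} ×ˢ Finset.range (d K)).powerset,
        ∑ U ∈ (sig q n K).powerset, g (∑ p ∈ V ∪ U, q^p.1) (V ∪ U).card =
        ∑ m ∈ Finset.range (q^K),
          ((∏ t ∈ Finset.range K, (d t).choose (m / q^t % q) : ℕ) : ℝ) *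
            g (m + q^K * V.card) ((∑ t ∈ Finset.range K, m / q^t % q) + V.card) := by
      intro V hV
      have hVcol : V ⊆ {K} ×ˢ Finset.range (d K) := Finset.mem_powerset.mp hV
      have hvalV : ∑ p ∈ V, q^p.1 = q^K * V.card := by
        have : ∀ p ∈ V, q^p.1 = q^K := by
          intro p hp
          have := (Finset.mem_product.mp (hVcol hp)).1
          rw [Finset.mem_singleton.mp this]
        rw [Finset.sum_congr rfl this, Finset.sum_const, smul_eq_mul, mul_comm]
      have htrans : ∀ U ∈ (sig q n K).powerset,
          g (∑ p ∈ V ∪ U, q^p.1) (V ∪ U).card =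
          g ((∑ p ∈ U, q^p.1) + q^K * V.card) (U.card + V.card) := by
        intro U hU
        have hUV : Disjoint V U := by
          apply Finset.disjoint_of_subset_left hVcol
          apply Finset.disjoint_of_subset_right (Finset.mem_powerset.mp hU)
          exact sig_col_disjoint q n K
        rw [Finset.sum_union hUV, Finset.card_union_of_disjoint hUV, hvalV]
        rw [Nat.add_comm, Nat.add_comm V.card U.card]
      rw [Finset.sum_congr rfl htrans]
      exact ih (fun m c => g (m + q^K * V.card) (c + V.card))
    rw [Finset.sum_congr rfl hstep]
    rw [sum_powerset_card ({K} ×ˢ Finset.range (d K))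
      (fun j => ∑ m ∈ Finset.range (q^K),
        ((∏ t ∈ Finset.range K, (d t).choose (m / q^t % q) : ℕ) : ℝ) *
          g (m + q^K * j) ((∑ t ∈ Finset.range K, m / q^t % q) + j)), hcol_card]
    -- extend j-range from d K + 1 to q
    rw [Finset.sum_subset (Finset.range_subset_range.mpr (by omega : d K + 1 ≤ q))
      (fun j _ hj => by
        have hjd : d K < j := by
          simp only [Finset.mem_range, not_lt] at *
          omega
        rw [Nat.choose_eq_zero_of_lt hjd]
        push_cast
        ring)]
    -- reindex RHS
    rw [pow_succ, sum_range_mul' (q^K) q]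
    refine Finset.sum_congr rfl fun j hj => ?_
    have hjq : j < q := Finset.mem_range.mp hj
    rw [Finset.mul_sum]
    refine Finset.sum_congr rfl fun m hm => ?_
    have hmq : m < q^K := Finset.mem_range.mp hm
    have hdig : ∀ t, t ≤ K → (m + q^K * j) / q^t % q =
        if t < K then m / q^t % q else j := by
      intro t ht
      rw [shift_digit hq hmq t ht]
      by_cases h : t < K
      · rw [if_pos h, if_pos h]
      · rw [if_neg h, if_neg h, Nat.mod_eq_of_lt hjq]
    have h1 : ∏ t ∈ Finset.range (K+1), (d t).choose ((m + q^K * j) / q^t % q) =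
        (∏ t ∈ Finset.range K, (d t).choose (m / q^t % q)) * (d K).choose j := by
      rw [Finset.prod_range_succ]
      congr 1
      · refine Finset.prod_congr rfl fun t ht => ?_
        have ht' : t < K := Finset.mem_range.mp ht
        rw [hdig t (by omega), if_pos ht']
      · rw [hdig K (by omega), if_neg (by omega)]
    have h2 : ∑ t ∈ Finset.range (K+1), (m + q^K * j) / q^t % q =
        (∑ t ∈ Finset.range K, m / q^t % q) + j := by
      rw [Finset.sum_range_succ]
      congr 1
      · refine Finset.sum_congr rfl fun t ht => ?_
        have ht' : t < K := Finset.mem_range.mp ht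
        rw [hdig t (by omega), if_pos ht']
      · rw [hdig K (by omega), if_neg (by omega)]
    rw [h1, h2]
    push_cast
    ring

/-- Base-`q` digit sum `{n} = Σ_t n_t`, where `n_t = n / q^t % q`. -/
def digitSum (q n : ℕ) : ℕ := ∑ t ∈ Finset.range (n + 1), n / q ^ t % q

/-- Fractal binomial coefficient `C_q(n,m) = Π_t binom(n_t, m_t)`. -/
def Cq (q n m : ℕ) : ℕ :=
  ∏ t ∈ Finset.range (n + m + 1), Nat.choose (n / q ^ t % q) (m / q ^ t % q)

/-- The Abel-type factor `A_t(m)`: `A_t(0) = 1` and `A_t(m) = t·(t+m)^{{m}−1}` for `m ≥ 1`. -/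
noncomputable def Afun (q : ℕ) (t : ℝ) (m : ℕ) : ℝ :=
  if m = 0 then 1 else t * (t + m) ^ (digitSum q m - 1)

section Final

variable {q : ℕ}

lemma lt_pow_self' (hq : 2 ≤ q) (n : ℕ) : n < q^(n+1) := by
  calc n < 2^n := Nat.lt_two_pow_self
  _ ≤ 2^(n+1) := Nat.pow_le_pow_right (by omega) (by omega)
  _ ≤ q^(n+1) := Nat.pow_le_pow_left hq (n+1)

lemma pow_gt_of_le (hq : 2 ≤ q) {m t : ℕ} (h : m + 1 ≤ t) : m < q^t := by
  calc m < q^(m+1) := lt_pow_self' hq m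
  _ ≤ q^t := Nat.pow_le_pow_right (by omega) h

lemma digits_sum_eq (hq : 2 ≤ q) {m K : ℕ} (hm : m < q^K) :
    ∑ t ∈ Finset.range K, (m / q^t % q) * q^t = m := by
  rw [digit_expansion hq, Nat.mod_eq_of_lt hm]

lemma digitSum_eq_range (hq : 2 ≤ q) {m K : ℕ} (hm : m + 1 ≤ K) :
    ∑ t ∈ Finset.range K, m / q^t % q = digitSum q m := by
  rw [digitSum]
  symm
  apply Finset.sum_subset (Finset.range_subset_range.mpr hm)
  intro t _ ht
  have htm : m + 1 ≤ t := by
    simp only [Finset.mem_range, not_lt] at *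
    omega
  rw [Nat.div_eq_of_lt (pow_gt_of_le hq htm)]
  simp

theorem stmt17' (hq : 2 ≤ q) (n : ℕ) (hn : 1 ≤ n) (φ β : ℝ) :
    (φ + β) * (φ + β + n) ^ (digitSum q n - 1) =
      ∑ m ∈ Finset.range (n + 1), (Cq q n m : ℝ) * Afun q φ m * Afun q β (n - m) := by
  have hq0 : 0 < q := by omega
  have hnK : n < q^(n+1) := lt_pow_self' hq n
  have hexp : ∑ t ∈ Finset.range (n+1), (n / q^t % q) * q^t = n := digits_sum_eq hq hnK
  have hSdef : digitSum q n = ∑ t ∈ Finset.range (n+1), n / q^t % q := rfl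
  have hpair : ∀ x ∈ Finset.range (n+1), ∀ y ∈ Finset.range (n+1), x ≠ y →
      Disjoint ({x} ×ˢ Finset.range (n / q^x % q)) ({y} ×ˢ Finset.range (n / q^y % q)) := by
    intro x _ y _ hxy
    rw [Finset.disjoint_left]
    intro p hp hp'
    have h1 := Finset.mem_singleton.mp (Finset.mem_product.mp hp).1
    have h2 := Finset.mem_singleton.mp (Finset.mem_product.mp hp').1
    exact hxy (h1 ▸ h2 ▸ rfl)
  have hcard : (sig q n (n+1)).card = digitSum q n := by
    rw [sig, Finset.card_biUnion hpair, hSdef]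
    refine Finset.sum_congr rfl fun t _ => ?_
    rw [Finset.card_product, Finset.card_singleton, Finset.card_range, one_mul]
  have hvalnat : ∑ p ∈ sig q n (n+1), q^p.1 = n := by
    rw [sig, Finset.sum_biUnion (fun x hx y hy hxy => hpair x hx y hy hxy)]
    have inner : ∀ t ∈ Finset.range (n+1),
        ∑ p ∈ {t} ×ˢ Finset.range (n / q^t % q), q^p.1 = (n / q^t % q) * q^t := by
      intro t _
      have : ∀ p ∈ {t} ×ˢ Finset.range (n / q^t % q), q^p.1 = q^t := by
        intro p hp
        rw [Finset.mem_singleton.mp (Finset.mem_product.mp hp).1]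
      rw [Finset.sum_congr rfl this, Finset.sum_const, Finset.card_product,
        Finset.card_singleton, Finset.card_range, one_mul, smul_eq_mul]
    rw [Finset.sum_congr rfl inner, hexp]
  have hcast : ∀ T : Finset (ℕ × ℕ), ∑ p ∈ T, ((q:ℝ))^p.1 = ((∑ p ∈ T, q^p.1 : ℕ) : ℝ) := by
    intro T
    rw [Nat.cast_sum]
    exact Finset.sum_congr rfl fun p _ => by push_cast; ring
  have hw : ∑ p ∈ sig q n (n+1), ((q:ℝ))^p.1 = (n:ℝ) := by rw [hcast, hvalnat]
  have hS1 : 1 ≤ digitSum q n := by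
    by_contra h
    have h0 : digitSum q n = 0 := by omega
    rw [hSdef] at h0
    have : ∀ t ∈ Finset.range (n+1), n / q^t % q = 0 :=
      (Finset.sum_eq_zero_iff).mp h0
    have : n = 0 := by
      rw [← hexp]
      apply Finset.sum_eq_zero
      intro t ht
      rw [this t ht, zero_mul]
    omega
  have hne : (sig q n (n+1)).Nonempty := Finset.card_pos.mp (by rw [hcard]; omega)
  have hG := Gfun_eq (fun p : ℕ × ℕ => (q:ℝ)^p.1) φ β (sig q n (n+1)) hne
  rw [hw, hcard] at hG
  rw [← hG]
  clear hG
  -- rewrite each summand via g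
  have hTg : ∀ T ∈ (sig q n (n+1)).powerset,
      Aset (fun p : ℕ × ℕ => (q:ℝ)^p.1) φ T *
        Aset (fun p : ℕ × ℕ => (q:ℝ)^p.1) β (sig q n (n+1) \ T) =
      (fun (m c : ℕ) => (if m = 0 then (1:ℝ) else φ * (φ + (m:ℝ))^(c-1)) *
        (if c = digitSum q n then (1:ℝ)
          else β * (β + ((n - m : ℕ):ℝ))^(digitSum q n - c - 1)))
        (∑ p ∈ T, q^p.1) T.card := by
    intro T hT
    have hTs : T ⊆ sig q n (n+1) := Finset.mem_powerset.mp hT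
    have hvc : ∑ p ∈ sig q n (n+1) \ T, q^p.1 = n - ∑ p ∈ T, q^p.1 := by
      have h2 : (∑ p ∈ sig q n (n+1) \ T, q^p.1) + ∑ p ∈ T, q^p.1 =
          ∑ p ∈ sig q n (n+1), q^p.1 := Finset.sum_sdiff hTs
      rw [hvalnat] at h2
      omega
    have hcc : (sig q n (n+1) \ T).card = digitSum q n - T.card := by
      rw [Finset.card_sdiff_of_subset hTs, hcard]
    simp only
    congr 1
    · rw [Aset]
      by_cases h : T = ∅
      · rw [if_pos h, if_pos (by rw [h]; simp)]
      · have hpos : 0 < ∑ p ∈ T, q^p.1 :=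
          Finset.sum_pos (fun p _ => pow_pos hq0 _)
            (Finset.nonempty_of_ne_empty h)
        rw [if_neg h, if_neg (by omega), hcast]
    · rw [Aset]
      have hiff : sig q n (n+1) \ T = ∅ ↔ T.card = digitSum q n := by
        rw [Finset.sdiff_eq_empty_iff_subset]
        constructor
        · intro h
          rw [Finset.Subset.antisymm hTs h, hcard]
        · intro h
          have : T = sig q n (n+1) :=
            Finset.eq_of_subset_of_card_le hTs (by rw [hcard, h])
          rw [this]
      by_cases h : sig q n (n+1) \ T = ∅
      · rw [if_pos h, if_pos (hiff.mp h)]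
      · rw [if_neg h, if_neg (fun hc => h (hiff.mpr hc)), hcast, hvc, hcc]
  rw [Finset.sum_congr rfl hTg, counting hq n (n+1)
    (fun (m c : ℕ) => (if m = 0 then (1:ℝ) else φ * (φ + (m:ℝ))^(c-1)) *
      (if c = digitSum q n then (1:ℝ)
        else β * (β + ((n - m : ℕ):ℝ))^(digitSum q n - c - 1)))]
  -- shrink the range from q^(n+1) to n+1
  rw [← Finset.sum_subset (Finset.range_subset_range.mpr (by omega : n + 1 ≤ q^(n+1)))
    (fun m hm hm' => by
      have hmq : m < q^(n+1) := Finset.mem_range.mp hm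
      have hmn : n < m := by
        simp only [Finset.mem_range, not_lt] at hm'
        omega
      have hzero : ∏ t ∈ Finset.range (n+1), (n / q^t % q).choose (m / q^t % q) = 0 := by
        by_contra hz
        have hdom : ∀ t ∈ Finset.range (n+1), m / q^t % q ≤ n / q^t % q := by
          intro t ht
          by_contra hlt
          exact hz (Finset.prod_eq_zero ht (Nat.choose_eq_zero_of_lt (by omega)))
        have : m ≤ n := by
          calc m = ∑ t ∈ Finset.range (n+1), (m / q^t % q) * q^t :=
                (digits_sum_eq hq hmq).symm
          _ ≤ ∑ t ∈ Finset.range (n+1), (n / q^t % q) * q^t :=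
                Finset.sum_le_sum fun t ht => Nat.mul_le_mul_right _ (hdom t ht)
          _ = n := hexp
        omega
      rw [hzero]
      push_cast
      ring)]
  -- match summands
  refine Finset.sum_congr rfl fun m hm => ?_
  have hmn : m ≤ n := by
    have := Finset.mem_range.mp hm
    omega
  have hcoeff : ∏ t ∈ Finset.range (n+1), (n / q^t % q).choose (m / q^t % q) = Cq q n m := by
    rw [Cq]
    apply Finset.prod_subset (Finset.range_subset_range.mpr (by omega : n + 1 ≤ n + m + 1))
    intro t _ ht
    have htn : n + 1 ≤ t := by
      simp only [Finset.mem_range, not_lt] at *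
      omega
    rw [Nat.div_eq_of_lt (pow_gt_of_le hq htn),
      Nat.div_eq_of_lt (pow_gt_of_le hq (by omega))]
    simp
  have hds : ∑ t ∈ Finset.range (n+1), m / q^t % q = digitSum q m :=
    digitSum_eq_range hq (by omega)
  rw [hcoeff, hds]
  by_cases hz : Cq q n m = 0
  · rw [hz]
    push_cast
    ring
  · -- digit domination
    have hdom : ∀ t, t < n + 1 → m / q^t % q ≤ n / q^t % q := by
      intro t ht
      by_contra hlt
      apply hz
      rw [← hcoeff]
      exact Finset.prod_eq_zero (Finset.mem_range.mpr ht)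
        (Nat.choose_eq_zero_of_lt (by omega))
    have hsub : ∑ t ∈ Finset.range (n+1), (n / q^t % q - m / q^t % q) * q^t = n - m := by
      have h1 : ∀ t ∈ Finset.range (n+1),
          (n / q^t % q - m / q^t % q) * q^t = (n / q^t % q) * q^t - (m / q^t % q) * q^t :=
        fun t _ => Nat.sub_mul _ _ _
      have h2 := Finset.sum_tsub_distrib (s := Finset.range (n+1))
        (f := fun t => (n / q^t % q) * q^t) (g := fun t => (m / q^t % q) * q^t)
        (fun t ht => Nat.mul_le_mul_right _ (hdom t (Finset.mem_range.mp ht)))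
      rw [Finset.sum_congr rfl h1, h2, hexp, digits_sum_eq hq (by omega : m < q^(n+1))]
    have hdig_nm : ∀ r, (n - m) / q^r % q =
        if r < n+1 then n / q^r % q - m / q^r % q else 0 := by
      intro r
      rw [← hsub]
      exact val_digit hq r (n+1) _ (fun t ht => by
        have := Nat.mod_lt (n / q^t) hq0
        omega)
    have hds_nm : digitSum q (n - m) = digitSum q n - digitSum q m := by
      rw [← digitSum_eq_range hq (by omega : (n - m) + 1 ≤ n + 1)]
      have h1 : ∀ t ∈ Finset.range (n+1), (n - m) / q^t % q =
          n / q^t % q - m / q^t % q := by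
        intro t ht
        rw [hdig_nm t, if_pos (Finset.mem_range.mp ht)]
      have h2 := Finset.sum_tsub_distrib (s := Finset.range (n+1))
        (f := fun t => n / q^t % q) (g := fun t => m / q^t % q)
        (fun t ht => hdom t (Finset.mem_range.mp ht))
      rw [Finset.sum_congr rfl h1, h2, ← hds, ← hSdef]
    have hiff2 : digitSum q m = digitSum q n ↔ n - m = 0 := by
      constructor
      · intro h
        have heq : ∀ t ∈ Finset.range (n+1), m / q^t % q = n / q^t % q := by
          rw [← Finset.sum_eq_sum_iff_of_le (fun t ht => hdom t (Finset.mem_range.mp ht))]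
          rw [hds, ← hSdef, h]
        have : m = n := by
          calc m = ∑ t ∈ Finset.range (n+1), (m / q^t % q) * q^t :=
                (digits_sum_eq hq (by omega : m < q^(n+1))).symm
          _ = ∑ t ∈ Finset.range (n+1), (n / q^t % q) * q^t :=
                Finset.sum_congr rfl fun t ht => by rw [heq t ht]
          _ = n := hexp
        omega
      · intro h
        have : m = n := by omega
        rw [this]
    simp only [Afun]
    rw [hds_nm]
    by_cases h : digitSum q m = digitSum q n
    · rw [if_pos h, if_pos (hiff2.mp h)]
      ring
    · rw [if_neg h, if_neg (fun hc => h (hiff2.mpr hc))]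
      ring

end Final

/-- The fractal analog of the generalized binomial Abel formula:
`(φ+β)·(φ+β+n)^{{n}−1} = Σ_{m=0}^n C_q(n,m)·A_φ(m)·A_β(n−m)`. -/
theorem stmt17 (q : ℕ) (hq : 2 ≤ q) (n : ℕ) (hn : 1 ≤ n) (φ β : ℝ) :
    (φ + β) * (φ + β + n) ^ (digitSum q n - 1) =
      ∑ m ∈ Finset.range (n + 1), (Cq q n m : ℝ) * Afun q φ m * Afun q β (n - m) :=
  stmt17' hq n hn φ β
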